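/- arXiv:2006.16799 — 5 statements merged into one kernel-verified Lean document; each statement's English description precedes it below -/
import Mathlib

section
/- The 4-dimensional algebra over F_2 with basis 1, s, x, w and relations s² = 1, sx = wx = w² = w, xs = 1 + s + w, ws = 1 + s + x, sw = xw = x² = x, equipped with Δ(s) = s⊗s, Δ(x) = s⊗x + x⊗1, Δ(w) = 1⊗w + w⊗s, ε(s) = 1, ε(x) = ε(w) = 0, S(s) = s, S(x) = w, S(w) = 1 + s + x, is a Hopf algebra (called d_{sl_2}); it is noncommutative and noncocommutative. -/
open scoped BigOperators

namespace Digital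

abbrev F2 := ZMod 2

/-- Kronecker delta on basis indices. -/
def kd {n : ℕ} (i j : Fin n) : F2 := if i = j then 1 else 0

/-- Bialgebra axioms in structure-constant (tensor) form, for an algebra with
basis `x^0 = 1, x^1, …` over `F₂`: `x^μ x^ν = Σ_ρ V μ ν ρ x^ρ`,
`Δ x^μ = Σ C μ ν ρ x^ν ⊗ x^ρ`, `ε x^μ = E μ`. -/
def IsBialgebraData {n : ℕ} [NeZero n] (V C : Fin n → Fin n → Fin n → F2)
    (E : Fin n → F2) : Prop :=
  -- unitality of the product
  (∀ μ ν, V 0 μ ν = kd μ ν) ∧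
  (∀ μ ν, V μ 0 ν = kd μ ν) ∧
  -- associativity
  (∀ ρ ν μ γ, ∑ l, V ρ ν l * V l μ γ = ∑ l, V ν μ l * V ρ l γ) ∧
  -- Δ 1 = 1 ⊗ 1 and ε 1 = 1
  (∀ ν ρ, C 0 ν ρ = kd ν 0 * kd ρ 0) ∧
  (E 0 = 1) ∧
  -- coassociativity
  (∀ μ α β γ, ∑ ν, C μ ν γ * C ν α β = ∑ ρ, C μ α ρ * C ρ β γ) ∧
  -- counit axioms
  (∀ μ ρ, ∑ ν, C μ ν ρ * E ν = kd μ ρ) ∧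
  (∀ μ ν, ∑ ρ, C μ ν ρ * E ρ = kd μ ν) ∧
  -- Δ is an algebra homomorphism
  (∀ μ ν l γ, ∑ ρ, V μ ν ρ * C ρ l γ =
      ∑ α, ∑ β, ∑ ρ, ∑ d, C μ α β * C ν ρ d * V α ρ l * V β d γ) ∧
  -- ε is an algebra homomorphism
  (∀ μ ν, ∑ ρ, V μ ν ρ * E ρ = E μ * E ν)

/-- Hopf algebra axioms in structure-constant form: bialgebra plus an antipode
matrix `S` with `S x^μ = Σ_ν S μ ν x^ν` satisfying
`m ∘ (S ⊗ id) ∘ Δ = η ∘ ε = m ∘ (id ⊗ S) ∘ Δ`. -/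
def IsHopfData {n : ℕ} [NeZero n] (V C : Fin n → Fin n → Fin n → F2)
    (E : Fin n → F2) (S : Fin n → Fin n → F2) : Prop :=
  IsBialgebraData V C E ∧
  (∀ μ β, ∑ ν, ∑ ρ, ∑ α, C μ ν ρ * S ν α * V α ρ β = E μ * kd β 0) ∧
  (∀ μ β, ∑ ν, ∑ ρ, ∑ l, C μ ν ρ * S ρ l * V ν l β = E μ * kd β 0)

/-- A right integral `∫ x^μ = I μ`, i.e. `(∫ ⊗ id) ∘ Δ = 1 ∫`. -/
def IsRightIntegral {n : ℕ} [NeZero n] (C : Fin n → Fin n → Fin n → F2)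
    (I : Fin n → F2) : Prop :=
  ∀ μ ρ, ∑ ν, C μ ν ρ * I ν = I μ * kd ρ 0

/-- Product of two elements `R, R'` of `H ⊗ H` given in coefficient form. -/
def mulTT {n : ℕ} (V : Fin n → Fin n → Fin n → F2) (R R' : Fin n → Fin n → F2)
    (σ τ : Fin n) : F2 :=
  ∑ μ, ∑ ν, ∑ α, ∑ β, R μ ν * R' α β * V μ α σ * V ν β τ

/-- The element `1 ⊗ 1` of `H ⊗ H` in coefficient form. -/
def unitTT {n : ℕ} [NeZero n] (σ τ : Fin n) : F2 := kd σ 0 * kd τ 0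

/-- Drinfeld's quasitriangularity axioms for `ℛ = Σ R μ ν x^μ ⊗ x^ν`:
`(Δ ⊗ id)ℛ = ℛ₁₃ℛ₂₃`, `(id ⊗ Δ)ℛ = ℛ₁₃ℛ₁₂`, `ℛ Δh = (Δ^{op} h) ℛ`. -/
def QTax {n : ℕ} (V C : Fin n → Fin n → Fin n → F2)
    (R : Fin n → Fin n → F2) : Prop :=
  (∀ α β ρ, ∑ μ, R μ ρ * C μ α β = ∑ μ, ∑ ν, R α μ * R β ν * V μ ν ρ) ∧
  (∀ μ α β, ∑ ν, R μ ν * C ν α β = ∑ ρ, ∑ ν, R ρ α * R ν β * V ν ρ μ) ∧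
  (∀ ρ σ τ, ∑ μ, ∑ ν, ∑ α, ∑ β, R μ ν * C ρ α β * V μ α σ * V ν β τ =
      ∑ μ, ∑ ν, ∑ α, ∑ β, R μ ν * C ρ β α * V α μ σ * V β ν τ)

/-- A quasitriangular structure: an invertible element of `H ⊗ H` satisfying the
Drinfeld axioms together with the counit conditions `(ε⊗id)ℛ = 1 = (id⊗ε)ℛ`. -/
def IsQT {n : ℕ} [NeZero n] (V C : Fin n → Fin n → Fin n → F2) (E : Fin n → F2)
    (R : Fin n → Fin n → F2) : Prop :=
  QTax V C R ∧
  (∀ ν, ∑ μ, E μ * R μ ν = kd ν 0) ∧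
  (∀ ν, ∑ μ, E μ * R ν μ = kd ν 0) ∧
  (∃ R', (∀ σ τ, mulTT V R R' σ τ = unitTT σ τ) ∧
         (∀ σ τ, mulTT V R' R σ τ = unitTT σ τ))


/-- Product of `d_{sl₂}` on the basis `1, s, x, w`:
`s² = 1`, `sx = wx = w² = w`, `xs = 1+s+w`, `ws = 1+s+x`,
`sw = xw = x² = x`. -/
def Vdsl : Fin 4 → Fin 4 → Fin 4 → F2 :=
  ![![![1,0,0,0],![0,1,0,0],![0,0,1,0],![0,0,0,1]],
    ![![0,1,0,0],![1,0,0,0],![0,0,0,1],![0,0,1,0]],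
    ![![0,0,1,0],![1,1,0,1],![0,0,1,0],![0,0,1,0]],
    ![![0,0,0,1],![1,1,1,0],![0,0,0,1],![0,0,0,1]]]

/-- Coproduct: `Δs = s⊗s`, `Δx = s⊗x + x⊗1`, `Δw = 1⊗w + w⊗s`. -/
def Cdsl : Fin 4 → Fin 4 → Fin 4 → F2 :=
  ![![![1,0,0,0],![0,0,0,0],![0,0,0,0],![0,0,0,0]],
    ![![0,0,0,0],![0,1,0,0],![0,0,0,0],![0,0,0,0]],
    ![![0,0,0,0],![0,0,1,0],![1,0,0,0],![0,0,0,0]],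
    ![![0,0,0,1],![0,0,0,0],![0,0,0,0],![0,1,0,0]]]

/-- Counit: `ε1 = εs = 1`, `εx = εw = 0`. -/
def Edsl : Fin 4 → F2 := ![1,1,0,0]

/-- Antipode: `Ss = s`, `Sx = w`, `Sw = 1 + s + x`. -/
def Sdsl : Fin 4 → Fin 4 → F2 :=
  ![![1,0,0,0],![0,1,0,0],![0,0,0,1],![1,1,1,0]]

set_option maxHeartbeats 4000000 in
theorem dsl2_aux :
    IsHopfData Vdsl Cdsl Edsl Sdsl ∧
    (∃ μ ν, Vdsl μ ν ≠ Vdsl ν μ) ∧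
    (∃ μ ν ρ, Cdsl μ ν ρ ≠ Cdsl μ ρ ν) := by
  unfold IsHopfData IsBialgebraData
  decide

/-- The 4-dimensional algebra over `F₂` with basis `1, s, x, w` and the stated
relations, coproduct, counit and antipode is a Hopf algebra (`d_{sl₂}`); it is
noncommutative and noncocommutative. -/
theorem dsl2_isHopf_noncomm_noncocomm :
    IsHopfData Vdsl Cdsl Edsl Sdsl ∧
    (∃ μ ν, Vdsl μ ν ≠ Vdsl ν μ) ∧
    (∃ μ ν ρ, Cdsl μ ν ρ ≠ Cdsl μ ρ ν) := dsl2_aux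

end Digital
end

section
/- The antipode S of the Hopf algebra d_{sl_2} over F_2 satisfies S⁴ = id but S² ≠ id. -/
/-- The matrix of the antipode of `d_{sl₂}` on the basis `1, s, x, w`:
`S1 = 1`, `Ss = s`, `Sx = w`, `Sw = 1 + s + x`. -/
def Sdsl : Matrix (Fin 4) (Fin 4) (ZMod 2) :=
  !![1,0,0,0; 0,1,0,0; 0,0,0,1; 1,1,1,0]

/-- The antipode of the Hopf algebra `d_{sl₂}` over `F₂` satisfies `S⁴ = id`
but `S² ≠ id`. -/
theorem dsl2_antipode_order : Sdsl ^ 4 = 1 ∧ Sdsl ^ 2 ≠ 1 := by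
  constructor
  · have h4 : Sdsl ^ 4 = Sdsl * Sdsl * (Sdsl * Sdsl) := by
      rw [pow_succ, pow_succ, pow_succ, pow_one]; noncomm_ring
    rw [h4, Sdsl]
    ext i j
    fin_cases i <;> fin_cases j <;>
      simp [Matrix.mul_apply, Fin.sum_univ_four, Matrix.one_apply] <;> decide
  · intro h
    have h2 : (Sdsl ^ 2) 2 0 = (1 : Matrix (Fin 4) (Fin 4) (ZMod 2)) 2 0 := by rw [h]
    rw [pow_two, Sdsl] at h2
    rw [Matrix.mul_apply, Fin.sum_univ_four] at h2
    revert h2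
    decide
end

section
/- The bilinear form ⟨·,·⟩ on d_{sl_2} determined on the basis 1, s, x, w by ⟨1,1⟩ = ⟨1,s⟩ = ⟨s,1⟩ = ⟨s,s⟩ = ⟨s,x⟩ = ⟨s,w⟩ = ⟨x,s⟩ = ⟨w,s⟩ = ⟨w,w⟩ = 1 and all other basis pairings zero, is a Hopf algebra self-duality pairing: ⟨ab, c⟩ = ⟨a⊗b, Δc⟩, ⟨a, bc⟩ = ⟨Δa, b⊗c⟩, ⟨1,a⟩ = ε(a) = ⟨a,1⟩, and ⟨Sa, b⟩ = ⟨a, Sb⟩ for all a, b, c. -/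
open scoped BigOperators

namespace Digital

/-- The self-duality pairing on the basis `1, s, x, w`. -/
def Pdsl : Fin 4 → Fin 4 → F2 :=
  ![![1,1,0,0],![1,1,1,1],![0,1,0,0],![0,1,0,1]]

/-- The stated bilinear form on `d_{sl₂}` is a Hopf algebra self-duality
pairing: `⟨ab,c⟩ = ⟨a⊗b, Δc⟩`, `⟨a,bc⟩ = ⟨Δa, b⊗c⟩`, `⟨1,a⟩ = εa = ⟨a,1⟩`,
and `⟨Sa,b⟩ = ⟨a,Sb⟩`. -/
theorem dsl2_selfduality_pairing :
    (∀ μ ν τ, ∑ ρ, Vdsl μ ν ρ * Pdsl ρ τ =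
        ∑ α, ∑ β, Cdsl τ α β * Pdsl μ α * Pdsl ν β) ∧
    (∀ μ ν τ, ∑ ρ, Vdsl ν τ ρ * Pdsl μ ρ =
        ∑ α, ∑ β, Cdsl μ α β * Pdsl α ν * Pdsl β τ) ∧
    (∀ μ, Pdsl 0 μ = Edsl μ) ∧ (∀ μ, Pdsl μ 0 = Edsl μ) ∧
    (∀ μ ν, ∑ α, Sdsl μ α * Pdsl α ν = ∑ α, Sdsl ν α * Pdsl μ α) := by
  refine ⟨?_,?_,?_,?_,?_⟩ <;> decide

end Digital
end

section
/- The algebra H = F_2[x]/(x^4) over F_2, equipped with Δ(x) = x⊗1 + 1⊗x + x²⊗x², ε(x) = 0, S(x) = x, is a Hopf algebra (Δ is a well-defined coassociative algebra map, ε a counit, and S an antipode), distinct from the anyonic line (which has x primitive) although built on the same algebra. -/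
open scoped BigOperators

namespace Digital

/-- Product of `F₂[x]/(x⁴)` on the basis `1, x, x², x³`. -/
def Van : Fin 4 → Fin 4 → Fin 4 → F2 :=
  ![![![1,0,0,0],![0,1,0,0],![0,0,1,0],![0,0,0,1]],
    ![![0,1,0,0],![0,0,1,0],![0,0,0,1],![0,0,0,0]],
    ![![0,0,1,0],![0,0,0,1],![0,0,0,0],![0,0,0,0]],
    ![![0,0,0,1],![0,0,0,0],![0,0,0,0],![0,0,0,0]]]

/-- The nonstandard coproduct: `Δx = x⊗1 + 1⊗x + x²⊗x²`, hence
`Δx² = x²⊗1 + 1⊗x²` and `Δx³ = x³⊗1 + x⊗x² + x²⊗x + 1⊗x³`. -/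
def Cnl : Fin 4 → Fin 4 → Fin 4 → F2 :=
  ![![![1,0,0,0],![0,0,0,0],![0,0,0,0],![0,0,0,0]],
    ![![0,1,0,0],![1,0,0,0],![0,0,1,0],![0,0,0,0]],
    ![![0,0,1,0],![0,0,0,0],![1,0,0,0],![0,0,0,0]],
    ![![0,0,0,1],![0,0,1,0],![0,1,0,0],![1,0,0,0]]]

def Ean : Fin 4 → F2 := ![1,0,0,0]

/-- Antipode `S = id`. -/
def San : Fin 4 → Fin 4 → F2 := fun μ ν => kd μ ν

/-- The primitive (anyonic line) coproduct on `F₂[x]/(x⁴)`. -/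
def Cany : Fin 4 → Fin 4 → Fin 4 → F2 := fun μ ν ρ =>
  if ν.val + ρ.val = μ.val then (Nat.choose μ.val ν.val : F2) else 0

set_option maxHeartbeats 4000000 in
/-- `F₂[x]/(x⁴)` with `Δx = x⊗1 + 1⊗x + x²⊗x²`, `εx = 0`, `Sx = x` is a Hopf
algebra over `F₂`, and it is distinct from the anyonic line (the same algebra
with `x` primitive): there is no bialgebra isomorphism between the two. -/
theorem nonlinear_anyonic_isHopf_distinct :
    IsHopfData Van Cnl Ean San ∧
    ¬∃ φ : Fin 4 → Fin 4 → F2, IsUnit (Matrix.of φ) ∧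
      (∀ μ ν τ, ∑ ρ, Van μ ν ρ * φ ρ τ = ∑ α, ∑ β, φ μ α * φ ν β * Van α β τ) ∧
      (∀ μ α β, ∑ ρ, φ μ ρ * Cany ρ α β = ∑ ν, ∑ ρ, Cnl μ ν ρ * φ ν α * φ ρ β) := by
  constructor
  · unfold IsHopfData IsBialgebraData
    decide
  · rintro ⟨φ, hU, hA, hC⟩
    have htwo : ∀ a b : F2, a * b + b * a = 0 := by decide
    have hsq : ∀ a : F2, a * a = 0 → a = 0 := by decide
    have h22 : φ 2 2 = 0 := by
      have h := hC 1 2 2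
      simp [Cany, Cnl, Fin.sum_univ_four, Matrix.vecHead, Matrix.vecTail,
        (show ((3:Fin 4):ℕ) = 3 from rfl)] at h
      rw [htwo, zero_add] at h
      exact hsq _ h.symm
    have h11 : φ 1 1 = 0 := by
      have h := hA 1 1 2
      simp [Van, Fin.sum_univ_four, Matrix.vecHead, Matrix.vecTail] at h
      exact hsq _ (by linear_combination h22 - h - htwo (φ 1 0) (φ 1 2))
    have h21 : φ 2 1 = 0 := by
      have h := hA 1 1 1
      simp [Van, Fin.sum_univ_four, Matrix.vecHead, Matrix.vecTail] at h
      rw [h11] at h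
      simpa using h
    have h31 : φ 3 1 = 0 := by
      have h := hA 1 2 1
      simp [Van, Fin.sum_univ_four, Matrix.vecHead, Matrix.vecTail] at h
      rw [h11, h21] at h
      simpa using h
    have h01 : φ 0 1 = 0 := by
      have h := hA 0 0 1
      simp [Van, Fin.sum_univ_four, Matrix.vecHead, Matrix.vecTail] at h
      rw [htwo] at h
      exact h
    have hdet : (Matrix.of φ).det = 0 := by
      apply Matrix.det_eq_zero_of_column_eq_zero 1
      intro i
      fin_cases i <;> assumption
    have := (Matrix.isUnit_iff_isUnit_det _).mp hU
    rw [hdet] at this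
    simp [isUnit_zero_iff] at this

end Digital
end

section
/- On the Hopf algebra H = F_2[x]/(x^4) with Δ(x) = x⊗1 + 1⊗x + x²⊗x², the elements ℛ_{α,β} = 1⊗1 + α·x²⊗x² + β·(x⊗x² + x²⊗x + x³⊗x³), for α, β ∈ {0,1}, are quasitriangular structures, and each satisfies ℛ₂₁ℛ = 1⊗1 (triangular). -/
open scoped BigOperators

namespace Digital

/-- `ℛ_{α,β} = 1⊗1 + α·x²⊗x² + β·(x⊗x² + x²⊗x + x³⊗x³)`. -/
def Ran (α β : F2) : Fin 4 → Fin 4 → F2 :=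
  ![![1,0,0,0],![0,0,β,0],![0,β,α,0],![0,0,0,β]]

set_option maxHeartbeats 4000000 in
set_option synthInstance.maxHeartbeats 1000000 in
/-- On the Hopf algebra `F₂[x]/(x⁴)` with `Δx = x⊗1 + 1⊗x + x²⊗x²`, every
`ℛ_{α,β}` (`α, β ∈ F₂`) is a quasitriangular structure and is triangular:
`ℛ₂₁ℛ = 1⊗1`. -/
theorem nonlinear_anyonic_quasitriangular :
    ∀ α β : F2, IsQT Van Cnl Ean (Ran α β) ∧
      (∀ σ τ, mulTT Van (fun μ ν => Ran α β ν μ) (Ran α β) σ τ = unitTT σ τ) := by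
  intro α β
  refine ⟨⟨⟨?_, ?_, ?_⟩, ?_, ?_, ⟨Ran α β, ?_, ?_⟩⟩, ?_⟩ <;>
  fin_cases α <;> fin_cases β <;>
    simp (config := { maxSteps := 10000000 }) only [QTax, IsQT, mulTT, unitTT,
      Fin.sum_univ_four, Fin.forall_fin_succ, IsEmpty.forall_iff, Van, Cnl, Ran, Ean, kd,
      Matrix.cons_val_zero, Matrix.cons_val_one, Matrix.cons_val_two, Matrix.cons_val_three,
      Matrix.head_cons, Matrix.tail_cons, Matrix.vecHead, Matrix.vecTail,
      Function.comp_apply, Function.comp, Matrix.cons_val_succ,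
      Matrix.cons_val', Matrix.cons_val_fin_one, Matrix.empty_val', and_true, true_and, and_self] <;>
    decide

end Digital
end
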